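/- arXiv:1809.04628 — 2 statements merged into one kernel-verified Lean document; each statement's English description precedes it below -/
import Mathlib

section
/- Let p ≥ 3 be a prime. Then for every n ∈ ℕ₊, ν_p( D_p(n) − D_p(n−1) ) = 1. -/
open PowerSeries Finset

/-- The number of digits equal to `i` in the base-`p` representation of `n`. -/
def Np (p i n : ℕ) : ℕ := (Nat.digits p n).count i

/-- `Dcoef p r n` is the coefficient of `x^n` in `∏_{i=0}^∞ (1 - x^{p^i})^r`.
Since `p ≥ 2`, the factors with index `i > n` do not affect the coefficient of `x^n`,
so the product may be truncated at `i = n`. -/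
noncomputable def Dcoef (p r n : ℕ) : ℤ :=
  PowerSeries.coeff n (∏ i ∈ Finset.range (n + 1), (1 - PowerSeries.X ^ p ^ i) ^ r)

/-- `Dp p n = D_{p,p-1}(n)`. -/
noncomputable def Dp (p n : ℕ) : ℤ := Dcoef p (p - 1) n

/-- `Acoef m k n` is the coefficient of `x^n` in `∏_{i=0}^∞ (1 - x^{m^i})^{-k}`,
the number of `k`-colored `m`-ary partitions of `n`.  Here `(1 - X^{m^i})⁻¹` is
realized as `PowerSeries.invOfUnit (1 - X ^ m ^ i) 1`, and since `m ≥ 2` the factors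
with index `i > n` do not affect the coefficient of `x^n`. -/
noncomputable def Acoef (m k n : ℕ) : ℤ :=
  PowerSeries.coeff n
    (∏ i ∈ Finset.range (n + 1),
      (PowerSeries.invOfUnit (1 - PowerSeries.X ^ m ^ i) 1) ^ k)

/-! ### Auxiliary machinery -/

/-- Truncated product as a polynomial. -/
noncomputable def Q (p r N : ℕ) : Polynomial ℤ :=
  ∏ i ∈ Finset.range N, (1 - Polynomial.X ^ p ^ i) ^ r

lemma Dcoef_eq_Q (p r n : ℕ) : Dcoef p r n = (Q p r (n + 1)).coeff n := by
  rw [Dcoef, ← Polynomial.coeff_coe]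
  congr 1
  rw [Q, ← Polynomial.coeToPowerSeries.ringHom_apply, map_prod]
  simp [Polynomial.coeToPowerSeries.ringHom_apply, Polynomial.coe_pow, Polynomial.coe_sub,
    Polynomial.coe_one, Polynomial.coe_X]

lemma coeff_one_sub_pow (s r m : ℕ) (hs : 0 < s) :
    ((1 - Polynomial.X ^ s : Polynomial ℤ) ^ r).coeff m =
      if s ∣ m then (-1) ^ (m / s) * (r.choose (m / s) : ℤ) else 0 := by
  have h1 : (1 - Polynomial.X ^ s : Polynomial ℤ) = (-Polynomial.X ^ s) + 1 := by ring
  rw [h1, add_pow]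
  rw [Polynomial.finset_sum_coeff]
  have hterm : ∀ k ∈ range (r + 1),
      ((-Polynomial.X ^ s : Polynomial ℤ) ^ k * 1 ^ (r - k) * (r.choose k : Polynomial ℤ)).coeff m
        = (if s * k = m then ((-1) ^ k * (r.choose k : ℤ)) else 0) := by
    intro k _
    have h2 : (-Polynomial.X ^ s : Polynomial ℤ) ^ k * 1 ^ (r - k) * (r.choose k : Polynomial ℤ)
        = Polynomial.C ((-1) ^ k * (r.choose k : ℤ)) * Polynomial.X ^ (s * k) := by
      rw [neg_pow, ← pow_mul]
      simp [mul_comm, mul_assoc, mul_left_comm]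
    rw [h2, Polynomial.coeff_C_mul, Polynomial.coeff_X_pow]
    simp [eq_comm]
  rw [Finset.sum_congr rfl hterm]
  by_cases hd : s ∣ m
  · obtain ⟨q, rfl⟩ := hd
    rw [if_pos (Dvd.intro q rfl), Nat.mul_div_cancel_left q hs]
    rw [Finset.sum_congr rfl (fun x _ => if_congr
      ⟨fun h => Nat.eq_of_mul_eq_mul_left hs h, fun h => by rw [h]⟩ rfl rfl)]
    rw [Finset.sum_ite_eq' (range (r + 1)) q (fun x => (-1) ^ x * (r.choose x : ℤ))]
    by_cases hq : q ∈ range (r + 1)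
    · rw [if_pos hq]
    · rw [if_neg hq, Nat.choose_eq_zero_of_lt (by simpa using hq)]
      simp
  · rw [if_neg hd, Finset.sum_eq_zero]
    intro k _
    rw [if_neg]
    rintro rfl
    exact hd (Dvd.intro k rfl)

lemma coeff_Q_stable {p : ℕ} (hp2 : 2 ≤ p) (r n N : ℕ) (hN : n + 1 ≤ N) :
    (Q p r N).coeff n = (Q p r (n + 1)).coeff n := by
  induction N, hN using Nat.le_induction with
  | base => rfl
  | succ N hN ih =>
    rw [← ih, Q, Finset.prod_range_succ, ← Q, Polynomial.coeff_mul]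
    have hlt : n < p ^ N := lt_of_lt_of_le (Nat.lt_two_pow_self (n := n))
      (le_trans (Nat.pow_le_pow_right (by norm_num) (by omega)) (Nat.pow_le_pow_left hp2 N))
    rw [Finset.sum_eq_single_of_mem (n, 0) (by simp)]
    · rw [coeff_one_sub_pow _ _ _ (pow_pos (by omega) N)]
      simp
    · rintro ⟨a, b⟩ hab hne
      rw [Finset.HasAntidiagonal.mem_antidiagonal] at hab
      have hb : b ≠ 0 := by
        rintro rfl
        exact hne (by simp [← hab])
      rw [coeff_one_sub_pow _ _ _ (pow_pos (by omega) N), if_neg, mul_zero]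
      intro hdvd
      have : p ^ N ≤ b := Nat.le_of_dvd (Nat.pos_of_ne_zero hb) hdvd
      omega

lemma Q_succ {p : ℕ} (hp : 0 < p) (r N : ℕ) :
    Q p r (N + 1) = (1 - Polynomial.X) ^ r * (Polynomial.expand ℤ p (Q p r N)) := by
  rw [Q, Finset.prod_range_succ', Q, map_prod]
  rw [mul_comm]
  congr 1
  · simp
  · apply Finset.prod_congr rfl
    intro i _
    rw [map_pow, map_sub, map_one, map_pow, Polynomial.expand_X, ← pow_mul, ← pow_succ']

lemma coeff_Q_succ {p : ℕ} (hp : p.Prime) (N n : ℕ) :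
    (Q p (p - 1) (N + 1)).coeff n =
      (-1) ^ (n % p) * ((p - 1).choose (n % p) : ℤ) * (Q p (p - 1) N).coeff (n / p) := by
  have hp0 : 0 < p := hp.pos
  rw [Q_succ hp0, Polynomial.coeff_mul]
  rw [Finset.sum_eq_single_of_mem (n % p, n / p * p)
    (by rw [Finset.HasAntidiagonal.mem_antidiagonal]; exact Nat.mod_add_div' n p)]
  · rw [Polynomial.coeff_expand_mul hp0]
    have := coeff_one_sub_pow 1 (p - 1) (n % p) one_pos
    simp only [pow_one, Nat.div_one, one_dvd, if_true] at this
    rw [this]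
  · rintro ⟨a, b⟩ hab hne
    rw [Finset.HasAntidiagonal.mem_antidiagonal] at hab
    rw [Polynomial.coeff_expand hp0]
    by_cases hdvd : p ∣ b
    · rw [if_pos hdvd]
      obtain ⟨t, rfl⟩ := hdvd
      by_cases halt : a < p
      · exfalso
        apply hne
        have h1 : n % p = a := by
          rw [← hab, Nat.add_mul_mod_self_left, Nat.mod_eq_of_lt halt]
        have h2 : n / p = t := by
          rw [← hab, Nat.add_mul_div_left _ _ hp0, Nat.div_eq_of_lt halt, zero_add]
        rw [h1, h2, mul_comm]
      · have := coeff_one_sub_pow 1 (p - 1) a one_pos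
        simp only [pow_one, Nat.div_one, one_dvd, if_true] at this
        rw [this, Nat.choose_eq_zero_of_lt (by omega)]
        simp
    · rw [if_neg hdvd, mul_zero]

/-- the digit factor -/
def cfac (p d : ℕ) : ℤ := (-1) ^ d * ((p - 1).choose d : ℤ)

lemma Dp_zero {p : ℕ} (hp : p.Prime) : Dp p 0 = 1 := by
  rw [Dp, Dcoef_eq_Q, coeff_Q_succ hp]
  simp [Q]

lemma Dp_rec {p : ℕ} (hp : p.Prime) (n : ℕ) (hn : 1 ≤ n) :
    Dp p n = cfac p (n % p) * Dp p (n / p) := by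
  have hp2 : 2 ≤ p := hp.two_le
  rw [Dp, Dcoef_eq_Q, coeff_Q_succ hp]
  have hlt : n / p + 1 ≤ n := by
    have h2 : n / p < n := Nat.div_lt_self hn (by omega)
    omega
  rw [coeff_Q_stable hp2 _ _ _ hlt, ← Dcoef_eq_Q, cfac, Dp]

lemma Dp_eq_prod {p : ℕ} (hp : p.Prime) (n : ℕ) :
    Dp p n = ((Nat.digits p n).map (cfac p)).prod := by
  induction n using Nat.strong_induction_on with
  | _ n ih =>
    have hp2 : 2 ≤ p := hp.two_le
    rcases Nat.eq_zero_or_pos n with rfl | hn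
    · simp [Dp_zero hp]
    · rw [Nat.digits_def' (by omega : 1 < p) hn, List.map_cons, List.prod_cons,
        Dp_rec hp n hn, ih (n / p) (Nat.div_lt_self hn (by omega))]

lemma cfac_modp {p : ℕ} (hp : p.Prime) (e : ℕ) (he : e < p) :
    ((cfac p e : ℤ) : ZMod p) = 1 := by
  haveI : NeZero p := ⟨hp.ne_zero⟩
  induction e with
  | zero => simp [cfac]
  | succ e ihe =>
    have ihe' : ((-1 : ZMod p)) ^ e * ((p - 1).choose e : ZMod p) = 1 := by
      have := ihe (by omega)
      push_cast [cfac] at this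
      exact this
    have hd : ((p.choose (e + 1) : ℕ) : ZMod p) = 0 := by
      rw [ZMod.natCast_eq_zero_iff]
      exact hp.dvd_choose_self (Nat.succ_ne_zero e) he
    have hps : p - 1 + 1 = p := Nat.succ_pred_eq_of_pos hp.pos
    have hcs : ((p - 1).choose e : ZMod p) + ((p - 1).choose (e + 1) : ZMod p) = 0 := by
      have h : p.choose (e + 1) = (p - 1).choose e + (p - 1).choose (e + 1) := by
        conv_lhs => rw [← hps]
        exact Nat.choose_succ_succ _ _
      rw [h] at hd
      push_cast at hd
      exact hd
    have hA : ((p - 1).choose (e + 1) : ZMod p) = -((p - 1).choose e : ZMod p) := by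
      linear_combination hcs
    push_cast [cfac]
    rw [hA, pow_succ]
    linear_combination ihe'

lemma Dp_not_dvd {p : ℕ} (hp : p.Prime) (n : ℕ) : ¬ (p : ℤ) ∣ Dp p n := by
  intro h
  have h1 : ((Dp p n : ℤ) : ZMod p) = 1 := by
    rw [Dp_eq_prod hp]
    have hcast := map_list_prod (Int.castRingHom (ZMod p)) ((Nat.digits p n).map (cfac p))
    simp only [Int.coe_castRingHom] at hcast
    rw [hcast, List.map_map]
    apply List.prod_eq_one
    intro x hx
    rw [List.mem_map] at hx
    obtain ⟨d, hd, rfl⟩ := hx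
    exact cfac_modp hp d (Nat.digits_lt_base hp.one_lt hd)
  rw [(ZMod.intCast_zmod_eq_zero_iff_dvd _ _).mpr h] at h1
  haveI : Fact (1 < p) := ⟨hp.one_lt⟩
  exact zero_ne_one h1

lemma cfac_last {p : ℕ} (hp : p.Prime) (hp3 : 3 ≤ p) : cfac p (p - 1) = 1 := by
  have hodd : Odd p := hp.odd_of_ne_two (by omega)
  have heven : Even (p - 1) := Nat.Odd.sub_odd hodd odd_one
  rw [cfac, Nat.choose_self, heven.neg_one_pow]
  simp

lemma choose_id {p : ℕ} (hp : 0 < p) (e : ℕ) :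
    p.choose (e + 1) = (p - 1).choose e + (p - 1).choose (e + 1) := by
  conv_lhs => rw [← Nat.succ_pred_eq_of_pos hp]
  exact Nat.choose_succ_succ _ _

lemma key {p : ℕ} (hp : p.Prime) (hp3 : 3 ≤ p) : ∀ n, 1 ≤ n →
    ∃ d u, 1 ≤ d ∧ d < p ∧
      Dp p n - Dp p (n - 1) = (-1) ^ d * (p.choose d : ℤ) * u ∧ ¬ (p : ℤ) ∣ u := by
  intro n
  induction n using Nat.strong_induction_on with
  | _ n ih =>
  intro hn
  have hAM := Nat.div_add_mod n p
  by_cases hd0 : n % p = 0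
  · have hdvd : p ∣ n := Nat.dvd_of_mod_eq_zero hd0
    have hq1 : 1 ≤ n / p := by
      rcases hdvd with ⟨t, rfl⟩
      rcases Nat.eq_zero_or_pos t with rfl | ht
      · omega
      · rw [Nat.mul_div_cancel_left t (by omega)]; exact ht
    have hqlt : n / p < n := Nat.div_lt_self hn (by omega)
    have h1 : Dp p n = Dp p (n / p) := by
      rw [Dp_rec hp n hn, hd0]
      simp [cfac]
    have hge : p ≤ n := Nat.le_of_dvd (by omega) hdvd
    have hsub : n - 1 = (p - 1) + p * (n / p - 1) := by
      rw [Nat.mul_sub, Nat.mul_one]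
      omega
    have hn1 : 1 ≤ n - 1 := by omega
    have h2 : Dp p (n - 1) = Dp p (n / p - 1) := by
      rw [Dp_rec hp (n - 1) hn1]
      rw [hsub, Nat.add_mul_mod_self_left, Nat.mod_eq_of_lt (by omega),
        Nat.add_mul_div_left _ _ (by omega : 0 < p), Nat.div_eq_of_lt (by omega), zero_add,
        cfac_last hp hp3, one_mul]
    rw [h1, h2]
    exact ih (n / p) hqlt hq1
  · set d := n % p with hd
    set q := n / p with hq
    have hdp : d < p := Nat.mod_lt _ hp.pos
    have h1 : Dp p n = cfac p d * Dp p q := Dp_rec hp n hn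
    have h2 : Dp p (n - 1) = cfac p (d - 1) * Dp p q := by
      rcases Nat.eq_zero_or_pos (n - 1) with h0 | hpos
      · have hn1 : n = 1 := by omega
        have : d = 1 := by rw [hd, hn1, Nat.mod_eq_of_lt (by omega)]
        rw [h0, this]
        have : q = 0 := by rw [hq, hn1, Nat.div_eq_of_lt (by omega)]
        rw [this, Dp_zero hp]
        simp [cfac]
      · have hsub : n - 1 = (d - 1) + p * q := by omega
        rw [Dp_rec hp (n - 1) hpos, hsub, Nat.add_mul_mod_self_left,
          Nat.mod_eq_of_lt (by omega), Nat.add_mul_div_left _ _ (by omega : 0 < p),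
          Nat.div_eq_of_lt (by omega), zero_add]
    have hkey : cfac p d - cfac p (d - 1) = (-1) ^ d * (p.choose d : ℤ) := by
      obtain ⟨e, hde⟩ : ∃ e, d = e + 1 := ⟨d - 1, by omega⟩
      rw [hde, cfac, cfac, Nat.add_sub_cancel, choose_id hp.pos]
      push_cast
      ring
    refine ⟨d, Dp p q, by omega, hdp, ?_, Dp_not_dvd hp q⟩
    rw [h1, h2, ← sub_mul, hkey, mul_assoc]

theorem stmt4 (p : ℕ) (hp : p.Prime) (hp3 : 3 ≤ p) (n : ℕ) (hn : 1 ≤ n) :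
    emultiplicity (p : ℤ) (Dp p n - Dp p (n - 1)) = 1 := by
  obtain ⟨d, u, hd1, hdp, heq, hu⟩ := key hp hp3 n hn
  have hprime : Prime (p : ℤ) := Nat.prime_iff_prime_int.mp hp
  have hdvd : (p : ℤ) ∣ (p.choose d : ℤ) :=
    Int.natCast_dvd_natCast.mpr (Nat.Prime.dvd_choose_self hp (by omega) hdp)
  have hnd2 : ¬ (p : ℤ) ^ 2 ∣ (p.choose d : ℤ) := by
    rw [show ((p : ℤ)) ^ 2 = ((p ^ 2 : ℕ) : ℤ) by push_cast; ring, Int.natCast_dvd_natCast]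
    intro h2
    have hfac := Nat.choose_mul_factorial_mul_factorial (le_of_lt hdp)
    have hdf : p ^ 2 ∣ p.factorial := by
      rw [← hfac]
      exact Dvd.dvd.mul_right (h2.mul_right _) _
    have hfact : p.factorial = p * (p - 1).factorial := by
      obtain ⟨m, hm⟩ : ∃ m, p = m + 1 := ⟨p - 1, by omega⟩
      rw [hm, Nat.factorial_succ, Nat.add_sub_cancel]
    rw [hfact, pow_two] at hdf
    have : p ∣ (p - 1).factorial := (Nat.mul_dvd_mul_iff_left hp.pos).mp hdf
    have := (Nat.Prime.dvd_factorial hp).mp this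
    omega
  have h1 : emultiplicity (p : ℤ) ((p.choose d : ℤ)) = 1 := by
    have := emultiplicity_eq_of_dvd_of_not_dvd (a := (p : ℤ)) (k := 1)
      (by simpa using hdvd) (by simpa using hnd2)
    simpa using this
  have h2 : emultiplicity (p : ℤ) ((-1 : ℤ) ^ d) = 0 := by
    rw [emultiplicity_eq_zero]
    intro h
    exact hprime.not_unit (isUnit_of_dvd_unit h ((isUnit_one.neg).pow d))
  have h3 : emultiplicity (p : ℤ) u = 0 := emultiplicity_eq_zero.mpr hu
  rw [heq, emultiplicity_mul hprime, emultiplicity_mul hprime, h1, h2, h3]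
  simp
end

section
/- Let p ≥ 3 be a prime, u ∈ {2,…,p−1}. Then at least one of the two congruences C(p+u−1, 0) − C(p+u−1, p) ≡ 0 (mod p²) and C(p+u−1, 1) − C(p+u−1, p+1) ≡ 0 (mod p²) fails; i.e., there exists j ∈ {0,1} with p² ∤ ( C(p+u−1, j) − C(p+u−1, p+j) ). -/
open PowerSeries Finset

theorem stmt7 (p u : ℕ) (hp : p.Prime) (hp3 : 3 ≤ p) (hu1 : 2 ≤ u) (hu2 : u ≤ p - 1) :
    ∃ j : ℕ, j ≤ 1 ∧
      ¬ ((p : ℤ) ^ 2 ∣ ((p + u - 1).choose j : ℤ) - ((p + u - 1).choose (p + j) : ℤ)) := by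
  by_contra h
  push_neg at h
  have h0 := h 0 (by norm_num)
  have h1 := h 1 (by norm_num)
  set n := p + u - 1 with hn
  have hnZ : (n : ℤ) = p + u - 1 := by
    have : (1:ℕ) ≤ p + u := by omega
    push_cast [hn, Nat.cast_sub this]; ring
  have hrel : (n.choose (p+1) : ℤ) * (p+1) = (n.choose p : ℤ) * ((u:ℤ) - 1) := by
    have h2 := Nat.choose_succ_right_eq n p
    have hnp : n - p = u - 1 := by omega
    rw [hnp] at h2
    have : ((n.choose (p+1) * (p+1) : ℕ) : ℤ) = ((n.choose p * (u-1) : ℕ) : ℤ) := by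
      exact_mod_cast congrArg (Nat.cast (R := ℤ)) h2
    push_cast [Nat.cast_sub (by omega : (1:ℕ) ≤ u)] at this
    linarith
  have h0' : (p:ℤ)^2 ∣ 1 - (n.choose p : ℤ) := by simpa using h0
  have h1' : (p:ℤ)^2 ∣ (n:ℤ) - (n.choose (p+1) : ℤ) := by
    have : p + 1 ≤ n := by omega
    simpa [Nat.choose_one_right] using h1
  have key : (p:ℤ)^2 ∣ (p:ℤ)^2 + (p:ℤ) * u := by
    have d1 : (p:ℤ)^2 ∣ ((n:ℤ) - (n.choose (p+1) : ℤ)) * ((p:ℤ)+1) := h1'.mul_right _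
    have d2 : (p:ℤ)^2 ∣ (1 - (n.choose p : ℤ)) * ((u:ℤ)-1) := h0'.mul_right _
    have heq : ((n:ℤ) - (n.choose (p+1) : ℤ)) * ((p:ℤ)+1)
        - (1 - (n.choose p : ℤ)) * ((u:ℤ)-1) = (p:ℤ)^2 + (p:ℤ) * u := by
      rw [hnZ]; nlinarith [hrel]
    have := dvd_sub d1 d2
    rwa [heq] at this
  have key2 : (p:ℤ)^2 ∣ (p:ℤ) * u := by
    have := dvd_sub key (dvd_refl ((p:ℤ)^2))
    simpa using this
  have hpu : (p:ℤ) ∣ (u:ℤ) := by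
    have hp0 : (p:ℤ) ≠ 0 := by positivity
    rcases key2 with ⟨c, hc⟩
    refine ⟨c, ?_⟩
    have : (p:ℤ) * (u:ℤ) = (p:ℤ) * ((p:ℤ) * c) := by rw [hc]; ring
    exact mul_left_cancel₀ hp0 this
  have : p ∣ u := by exact_mod_cast hpu
  have := Nat.le_of_dvd (by omega) this
  omega
end
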